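/- For every j₁, j₂ ∈ {0,1,2,3}, every digit c ∈ D̃(j₁,j₂), and all α, β ∈ R: if α = c + τ²·β in R and Q(α) > 20, then Q(β) < Q(α). -/

import Mathlib

open Polynomial

noncomputable def P (μ : ℤ) : ℤ[X] := X ^ 4 - C μ * X ^ 3 - C (2 * μ) * X + 4

noncomputable abbrev Rg (μ : ℤ) := AdjoinRoot (P μ)

noncomputable def tau (μ : ℤ) : Rg μ := AdjoinRoot.root (P μ)

noncomputable def Dtil (μ : ℤ) (j₁ j₂ : ℕ) : Set (Rg μ) :=
  {0, 1, -1, 2, -2, 1 + tau μ, 1 - tau μ, -1 + tau μ, -1 - tau μ,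
   (-1 : Rg μ) ^ (j₁ / 2) * (2 + tau μ), (-1 : Rg μ) ^ j₁ * (2 - tau μ),
   1 + 2 * (μ : Rg μ) * (-1 : Rg μ) ^ (j₂ / 2) * tau μ,
   -1 + 2 * (μ : Rg μ) * (-1 : Rg μ) ^ j₂ * tau μ}

noncomputable def Q (μ : ℤ) (α : Rg μ) : ℝ :=
  (1 / 2) * (((P μ).map (Int.castRingHom ℂ)).roots.attach.map
    (fun z => ‖AdjoinRoot.lift (Int.castRingHom ℂ) z.1
      (by
        have h2 : Polynomial.eval z.1 ((P μ).map (Int.castRingHom ℂ)) = 0 :=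
          (Polynomial.mem_roots'.mp z.2).2
        rwa [Polynomial.eval_map] at h2) α‖ ^ 2)).sum

/- ### Auxiliary lemmas -/


lemma P_monic (μ : ℤ) : (P μ).Monic := by unfold P; monicity!

lemma P_natDegree (μ : ℤ) : (P μ).natDegree = 4 := by unfold P; compute_degree!

lemma Pc_splits (μ : ℤ) : Splits ((P μ).map (Int.castRingHom ℂ)) :=
  IsAlgClosed.splits _

lemma Pc_natDegree (μ : ℤ) : ((P μ).map (Int.castRingHom ℂ)).natDegree = 4 := by
  rw [Polynomial.natDegree_map_eq_of_injective (by exact_mod_cast Int.cast_injective)]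
  exact P_natDegree μ

noncomputable def rootsM (μ : ℤ) : Multiset ℂ := ((P μ).map (Int.castRingHom ℂ)).roots

lemma rootsM_card (μ : ℤ) : Multiset.card (rootsM μ) = 4 := by
  rw [rootsM, (Polynomial.splits_iff_card_roots).mp (Pc_splits μ), Pc_natDegree]

lemma rootsM_sum (μ : ℤ) : (rootsM μ).sum = (μ : ℂ) := by
  have h := (Pc_splits μ).nextCoeff_eq_neg_sum_roots_of_monic
    ((P_monic μ).map (Int.castRingHom ℂ))
  have h2 : ((P μ).map (Int.castRingHom ℂ)).nextCoeff = -μ := by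
    rw [Polynomial.nextCoeff_of_natDegree_pos (by rw [Pc_natDegree]; norm_num)]
    rw [Pc_natDegree, Polynomial.coeff_map]
    have : (P μ).coeff 3 = -μ := by
      unfold P
      simp only [Polynomial.coeff_add, Polynomial.coeff_sub, Polynomial.coeff_X_pow,
        Polynomial.coeff_C_mul]
      rw [show ((4:ℤ[X]).coeff 3) = 0 by
        rw [show (4:ℤ[X]) = C 4 by simp, Polynomial.coeff_C]; norm_num]
      rw [show (X:ℤ[X]).coeff 3 = 0 by simp [Polynomial.coeff_X]]
      norm_num
    rw [this]; simp
  rw [h2] at h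
  rw [rootsM]
  linear_combination h

lemma root_eval (μ : ℤ) {z : ℂ} (hz : z ∈ rootsM μ) :
    z ^ 4 - μ * z ^ 3 - 2 * μ * z + 4 = 0 := by
  have h2 := (Polynomial.mem_roots'.mp hz).2
  have h3 : Polynomial.eval z ((P μ).map (Int.castRingHom ℂ)) = 0 := h2
  rw [Polynomial.eval_map] at h3
  unfold P at h3
  simp only [Polynomial.eval₂_add, Polynomial.eval₂_sub, Polynomial.eval₂_mul,
    Polynomial.eval₂_pow, Polynomial.eval₂_X, Polynomial.eval₂_C,
    Polynomial.eval₂_ofNat] at h3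
  simp only [Int.coe_castRingHom] at h3
  push_cast at h3
  linear_combination h3

lemma quad_normSq {z : ℂ} {c : ℝ} (hc : c^2 < 8) (h : z^2 - c*z + 2 = 0) :
    Complex.normSq z = 2 := by
  set x := z.re with hx
  set y := z.im with hy
  have hre : x^2 - y^2 - c*x + 2 = 0 := by
    have := congrArg Complex.re h
    simp [Complex.add_re, Complex.sub_re, Complex.mul_re, pow_two, Complex.ofReal_re] at this
    nlinarith [this]
  have him : y * (2*x - c) = 0 := by
    have := congrArg Complex.im h
    simp [Complex.add_im, Complex.sub_im, Complex.mul_im, pow_two] at this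
    nlinarith [this]
  rcases mul_eq_zero.mp him with h0 | h0
  · exfalso; nlinarith [sq_nonneg (2*x - c)]
  · have hxc : c = 2 * x := by linarith
    subst hxc
    have : x^2 + y^2 = 2 := by nlinarith [hre]
    simpa [Complex.normSq_apply, pow_two] using this

lemma root_normSq {μ : ℤ} (hμ : μ = 1 ∨ μ = -1) {z : ℂ}
    (hz : z ^ 4 - μ * z ^ 3 - 2 * μ * z + 4 = 0) : Complex.normSq z = 2 := by
  set s : ℝ := Real.sqrt 17 with hs
  have hs2 : s^2 = 17 := Real.sq_sqrt (by norm_num)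
  have hs4 : (4:ℝ) < s := by nlinarith [Real.sqrt_nonneg 17]
  have hμ2 : (μ:ℝ)^2 = 1 := by rcases hμ with rfl | rfl <;> norm_num
  have hμc : (μ:ℂ)^2 = 1 := by rcases hμ with rfl | rfl <;> norm_num
  have hsc : ((s:ℂ))^2 = 17 := by rw [← Complex.ofReal_pow, hs2]; norm_num
  have key : (z^2 - (((μ:ℝ)+s)/2 : ℝ)*z + 2) * (z^2 - (((μ:ℝ)-s)/2 : ℝ)*z + 2) = 0 := by
    push_cast
    linear_combination hz + (z^2/4) * hμc - (z^2/4) * hsc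
  rcases mul_eq_zero.mp key with h | h
  · exact quad_normSq (by nlinarith) h
  · exact quad_normSq (by nlinarith) h

lemma pfz (μ : ℤ) (z : {x // x ∈ rootsM μ}) :
    Polynomial.eval₂ (Int.castRingHom ℂ) z.1 (P μ) = 0 := by
  have h2 : Polynomial.eval z.1 ((P μ).map (Int.castRingHom ℂ)) = 0 :=
    (Polynomial.mem_roots'.mp z.2).2
  rwa [Polynomial.eval_map] at h2

noncomputable def phi (μ : ℤ) (z : {x // x ∈ rootsM μ}) : Rg μ →+* ℂ :=
  AdjoinRoot.lift (Int.castRingHom ℂ) z.1 (pfz μ z)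

lemma Q_eq (μ : ℤ) (α : Rg μ) :
    Q μ α = (1/2) * ((rootsM μ).attach.map (fun z => ‖phi μ z α‖^2)).sum := rfl

lemma phi_tau (μ : ℤ) (z : {x // x ∈ rootsM μ}) : phi μ z (tau μ) = z.1 :=
  AdjoinRoot.lift_root _

lemma norm_root_sq {μ : ℤ} (hμ : μ = 1 ∨ μ = -1) (z : {x // x ∈ rootsM μ}) :
    ‖z.1‖^2 = 2 := by
  rw [Complex.sq_norm]
  exact root_normSq hμ (root_eval μ z.2)

lemma Q_tausq {μ : ℤ} (hμ : μ = 1 ∨ μ = -1) (β : Rg μ) :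
    Q μ (tau μ ^ 2 * β) = 4 * Q μ β := by
  rw [Q_eq, Q_eq]
  rw [Multiset.map_congr rfl (fun z _ => by
    show ‖phi μ z (tau μ ^ 2 * β)‖^2 = 4 * ‖phi μ z β‖^2
    rw [map_mul, map_pow, phi_tau, norm_mul, norm_pow, mul_pow, ← pow_mul]
    rw [show (2*2 = 4) from rfl, show ‖z.1‖^4 = (‖z.1‖^2)^2 by ring, norm_root_sq hμ z]
    norm_num)]
  rw [Multiset.sum_map_mul_left]
  ring

lemma sum_re (μ : ℤ) : ((rootsM μ).map Complex.re).sum = (μ : ℝ) := by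
  have := (Complex.reAddGroupHom).map_multiset_sum (rootsM μ)
  rw [rootsM_sum] at this
  simpa using this.symm

lemma Qval {μ : ℤ} (hμ : μ = 1 ∨ μ = -1) (m n : ℤ) :
    Q μ ((m : Rg μ) + (n : Rg μ) * tau μ) =
      2*(m:ℝ)^2 + (μ:ℝ)*m*n + 4*(n:ℝ)^2 := by
  rw [Q_eq]
  rw [Multiset.map_congr rfl (fun z _ => by
    show ‖phi μ z ((m : Rg μ) + (n : Rg μ) * tau μ)‖^2
        = (m:ℝ)^2 + 2*(n:ℝ)^2 + (2*m*n) * z.1.re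
    rw [map_add, map_mul, phi_tau, map_intCast, map_intCast]
    rw [Complex.sq_norm]
    have hz2 : z.1.re^2 + z.1.im^2 = 2 := by
      have := root_normSq hμ (root_eval μ z.2)
      rw [Complex.normSq_apply] at this
      nlinarith [this]
    have hre : (((m:ℤ):ℂ) + ((n:ℤ):ℂ)*z.1).re = (m:ℝ) + (n:ℝ) * z.1.re := by
      simp [Complex.add_re, Complex.mul_re]
    have him : (((m:ℤ):ℂ) + ((n:ℤ):ℂ)*z.1).im = (n:ℝ) * z.1.im := by
      simp [Complex.add_im, Complex.mul_im]
    rw [Complex.normSq_apply, hre, him]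
    linear_combination (n:ℝ)^2 * hz2)]
  rw [Multiset.attach_map_val' (rootsM μ)
    (fun x => (m:ℝ)^2 + 2*(n:ℝ)^2 + (2*(m:ℝ)*(n:ℝ)) * x.re)]
  have hsplit : ((rootsM μ).map
      (fun x => (m:ℝ)^2 + 2*(n:ℝ)^2 + (2*(m:ℝ)*(n:ℝ)) * x.re)).sum
      = ((rootsM μ).map (fun _ => (m:ℝ)^2 + 2*(n:ℝ)^2)).sum
        + (2*(m:ℝ)*(n:ℝ)) * ((rootsM μ).map Complex.re).sum := by
    rw [← Multiset.sum_map_mul_left, ← Multiset.sum_map_add]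
  rw [hsplit, sum_re, Multiset.map_const', Multiset.sum_replicate, rootsM_card]
  push_cast
  ring

lemma Q_sub_le (μ : ℤ) (a b : Rg μ) : Q μ (a - b) ≤ 2 * Q μ a + 2 * Q μ b := by
  rw [Q_eq, Q_eq, Q_eq]
  have hpt : ∀ z ∈ (rootsM μ).attach,
      ‖phi μ z (a - b)‖^2 ≤ 2*‖phi μ z a‖^2 + 2*‖phi μ z b‖^2 := by
    intro z _
    rw [map_sub]
    have h1 := norm_sub_le (phi μ z a) (phi μ z b)
    have h2 : ‖phi μ z a - phi μ z b‖^2 ≤ (‖phi μ z a‖ + ‖phi μ z b‖)^2 :=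
      pow_le_pow_left₀ (norm_nonneg _) h1 2
    nlinarith [h2, sq_nonneg (‖phi μ z a‖ - ‖phi μ z b‖)]
  have hsum := Multiset.sum_map_le_sum_map _ _ hpt
  have hsplit : ((rootsM μ).attach.map
      (fun z => 2*‖phi μ z a‖^2 + 2*‖phi μ z b‖^2)).sum
      = 2 * ((rootsM μ).attach.map (fun z => ‖phi μ z a‖^2)).sum
        + 2 * ((rootsM μ).attach.map (fun z => ‖phi μ z b‖^2)).sum := by
    rw [← Multiset.sum_map_mul_left, ← Multiset.sum_map_mul_left, ← Multiset.sum_map_add]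
  rw [hsplit] at hsum
  linarith

lemma digit_repr {μ : ℤ} (hμ : μ = 1 ∨ μ = -1) {j₁ j₂ : ℕ} {c : Rg μ}
    (hc : c ∈ Dtil μ j₁ j₂) :
    ∃ m n : ℤ, c = (m : Rg μ) + (n : Rg μ) * tau μ ∧
      2*(m:ℝ)^2 + (μ:ℝ)*m*n + 4*(n:ℝ)^2 ≤ 20 := by
  have hsgn : ∀ k : ℕ, (-1 : Rg μ)^k = 1 ∨ (-1 : Rg μ)^k = -1 := fun k => by
    rcases Nat.even_or_odd k with hk | hk
    · exact Or.inl hk.neg_one_pow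
    · exact Or.inr hk.neg_one_pow
  have habs : (μ:ℝ) ≤ 1 ∧ -1 ≤ (μ:ℝ) := by rcases hμ with rfl | rfl <;> norm_num
  simp only [Dtil, Set.mem_insert_iff, Set.mem_singleton_iff] at hc
  rcases hc with rfl|rfl|rfl|rfl|rfl|rfl|rfl|rfl|rfl|rfl|rfl|rfl|rfl
  · exact ⟨0, 0, by push_cast; ring, by norm_num⟩
  · exact ⟨1, 0, by push_cast; ring, by norm_num⟩
  · exact ⟨-1, 0, by push_cast; ring, by norm_num⟩
  · exact ⟨2, 0, by push_cast; ring, by norm_num⟩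
  · exact ⟨-2, 0, by push_cast; ring, by norm_num⟩
  · exact ⟨1, 1, by push_cast; ring, by push_cast; nlinarith [habs.1, habs.2]⟩
  · exact ⟨1, -1, by push_cast; ring, by push_cast; nlinarith [habs.1, habs.2]⟩
  · exact ⟨-1, 1, by push_cast; ring, by push_cast; nlinarith [habs.1, habs.2]⟩
  · exact ⟨-1, -1, by push_cast; ring, by push_cast; nlinarith [habs.1, habs.2]⟩
  · rcases hsgn (j₁/2) with hp | hp <;> rw [hp]
    · exact ⟨2, 1, by push_cast; ring, by push_cast; nlinarith [habs.1, habs.2]⟩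
    · exact ⟨-2, -1, by push_cast; ring, by push_cast; nlinarith [habs.1, habs.2]⟩
  · rcases hsgn j₁ with hp | hp <;> rw [hp]
    · exact ⟨2, -1, by push_cast; ring, by push_cast; nlinarith [habs.1, habs.2]⟩
    · exact ⟨-2, 1, by push_cast; ring, by push_cast; nlinarith [habs.1, habs.2]⟩
  · rcases hsgn (j₂/2) with hp | hp <;> rw [hp] <;> rcases hμ with rfl | rfl
    · exact ⟨1, 2, by push_cast; ring, by norm_num⟩
    · exact ⟨1, -2, by push_cast; ring, by norm_num⟩
    · exact ⟨1, -2, by push_cast; ring, by norm_num⟩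
    · exact ⟨1, 2, by push_cast; ring, by norm_num⟩
  · rcases hsgn j₂ with hp | hp <;> rw [hp] <;> rcases hμ with rfl | rfl
    · exact ⟨-1, 2, by push_cast; ring, by norm_num⟩
    · exact ⟨-1, -2, by push_cast; ring, by norm_num⟩
    · exact ⟨-1, -2, by push_cast; ring, by norm_num⟩
    · exact ⟨-1, 2, by push_cast; ring, by norm_num⟩

/-- Norm decrease step for the τ-NAF: if `α = c + τ²·β` with `c ∈ D̃(j₁,j₂)` and
`Q(α) > 20`, then `Q(β) < Q(α)`. -/
theorem stmt17 (μ : ℤ) (hμ : μ = 1 ∨ μ = -1) (j₁ j₂ : ℕ) (hj₁ : j₁ < 4) (hj₂ : j₂ < 4)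
    (c : Rg μ) (hc : c ∈ Dtil μ j₁ j₂) (α β : Rg μ)
    (h : α = c + tau μ ^ 2 * β) (hQ : Q μ α > 20) :
    Q μ β < Q μ α := by
  obtain ⟨m, n, rfl, hle⟩ := digit_repr hμ hc
  have hQc : Q μ ((m : Rg μ) + (n : Rg μ) * tau μ) ≤ 20 := by
    rw [Qval hμ]; exact hle
  have h1 : Q μ (α - ((m : Rg μ) + (n : Rg μ) * tau μ)) = 4 * Q μ β := by
    rw [show α - ((m : Rg μ) + (n : Rg μ) * tau μ) = tau μ ^ 2 * β by rw [h]; ring]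
    exact Q_tausq hμ β
  have h2 := Q_sub_le μ α ((m : Rg μ) + (n : Rg μ) * tau μ)
  linarith
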